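/- arXiv:1907.12057 — 4 statements merged into one kernel-verified Lean document; each statement's English description precedes it below -/
import Mathlib

section
/- Let K be a number field, S a finite set of finite places of K, and f ∈ K[X] a polynomial of degree d ≥ 2. If the set V(K,f,S) = {α ∈ K : there exist an integer n ≥ 1, an integer ℓ with ℓ ≠ 0 and ℓ ≠ 1, and a ∈ R_S (with a ≠ 0 if ℓ < 0) such that f^(n)(α) = a^ℓ · α} is finite, then the set Ṽ(K,f,S) = {α ∈ K : there exist integers n ≥ 1 and k ≥ 0, an integer ℓ with ℓ ≠ 0 and ℓ ≠ 1, and a ∈ R_S (with a ≠ 0 if ℓ < 0) such that f^(n+k)(α) = a^ℓ · f^(k)(α)} is also finite. -/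
open Polynomial IsDedekindDomain Multiplicative Finset



open scoped Classical in
theorem assoc_le_of_count_le {α : Type*} [CommMonoidWithZero α]
    [UniqueFactorizationMonoid α] {a b : Associates α} (ha : a ≠ 0) (hb : b ≠ 0)
    (h : ∀ p : Associates α, Irreducible p → p.count a.factors ≤ p.count b.factors) :
    a ≤ b := by
  rw [← Associates.factors_le]
  obtain ⟨sa, h_sa⟩ := Associates.factors_eq_some_iff_ne_zero.mpr ha
  obtain ⟨sb, h_sb⟩ := Associates.factors_eq_some_iff_ne_zero.mpr hb
  rw [h_sa, h_sb] at h ⊢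
  rw [WithTop.coe_le_coe]
  rw [Multiset.le_iff_count]
  rintro ⟨p, hp⟩
  have := h p hp
  rwa [Associates.count_some hp, Associates.count_some hp] at this

open scoped Classical in
theorem dvd_of_intValuation_le {R : Type*} [CommRing R] [IsDedekindDomain R]
    {n d : R} (hn : n ≠ 0) (hd : d ≠ 0)
    (h : ∀ v : HeightOneSpectrum R, v.intValuationDef n ≤ v.intValuationDef d) :
    d ∣ n := by
  have hsn : Ideal.span {n} ≠ (0 : Ideal R) := by
    simpa [Ideal.span_singleton_eq_bot] using hn
  have hsd : Ideal.span {d} ≠ (0 : Ideal R) := by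
    simpa [Ideal.span_singleton_eq_bot] using hd
  have hle : @LE.le (Associates (Ideal R)) Associates.instPreorder.toLE
      (Associates.mk (Ideal.span {d} : Ideal R)) (Associates.mk (Ideal.span {n})) := by
    apply assoc_le_of_count_le (by simpa using hsd) (by simpa using hsn)
    intro p hp
    obtain ⟨I, rfl⟩ := Associates.mk_surjective p
    have hI : Irreducible I := Associates.irreducible_mk.mp hp
    have hIp : Prime I := UniqueFactorizationMonoid.irreducible_iff_prime.mp hI
    set v : HeightOneSpectrum R := ⟨I, Ideal.isPrime_of_prime hIp, hIp.ne_zero⟩ with hv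
    have := h v
    rw [HeightOneSpectrum.intValuationDef_if_neg _ hn,
      HeightOneSpectrum.intValuationDef_if_neg _ hd] at this
    rw [WithZero.exp_le_exp, neg_le_neg_iff, Int.ofNat_le] at this
    convert this
  replace hle := Associates.mk_le_mk_iff_dvd.mp hle
  have := Ideal.le_of_dvd hle
  have hmem : n ∈ Ideal.span ({d} : Set R) := this (Ideal.mem_span_singleton_self n)
  exact Ideal.mem_span_singleton.mp hmem

theorem isIntegral_of_valuation_le_one {K : Type*} [Field K] [NumberField K] (x : K)
    (h : ∀ v : HeightOneSpectrum (NumberField.RingOfIntegers K), v.valuation K x ≤ 1) :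
    IsIntegral ℤ x := by
  set R := NumberField.RingOfIntegers K
  obtain ⟨⟨n, d⟩, hx⟩ := IsLocalization.surj (nonZeroDivisors R) x
  simp only at hx
  have hd0 : (d : R) ≠ 0 := nonZeroDivisors.coe_ne_zero d
  have hdK : algebraMap R K d ≠ 0 :=
    (map_ne_zero_iff _ (IsFractionRing.injective R K)).mpr hd0
  by_cases hn0 : n = 0
  · have hx0 : x = 0 := by
      rw [hn0, map_zero] at hx
      rcases mul_eq_zero.mp hx with hx | hx
      · exact hx
      · exact absurd hx hdK
    exact hx0 ▸ isIntegral_zero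
  · have key : ∀ v : HeightOneSpectrum R, v.intValuationDef n ≤ v.intValuationDef d := by
      intro v
      have h1 : v.valuation K (algebraMap R K n) = v.valuation K x * v.valuation K (algebraMap R K d) := by
        rw [← Valuation.map_mul, hx]
      have h2 : v.valuation K (algebraMap R K n) ≤ v.valuation K (algebraMap R K d) := by
        rw [h1]
        calc v.valuation K x * v.valuation K (algebraMap R K d)
            ≤ 1 * v.valuation K (algebraMap R K d) := mul_le_mul_left (h v) _
          _ = v.valuation K (algebraMap R K d) := one_mul _
      rwa [HeightOneSpectrum.valuation_of_algebraMap, HeightOneSpectrum.valuation_of_algebraMap,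
        HeightOneSpectrum.intValuation_apply, HeightOneSpectrum.intValuation_apply] at h2
    have hdvd : (d : R) ∣ n := dvd_of_intValuation_le hn0 hd0 key
    obtain ⟨c, hc⟩ := hdvd
    have hxc : x = algebraMap R K c := by
      have : x * algebraMap R K d = algebraMap R K c * algebraMap R K d := by
        rw [hx, hc, map_mul]; ring
      exact mul_right_cancel₀ hdK this
    rw [hxc]
    have : IsIntegral ℤ ((c : K)) := NumberField.RingOfIntegers.isIntegral_coe c
    exact this

theorem finite_valuation_ne_one {R K : Type*} [CommRing R] [IsDedekindDomain R] [Field K]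
    [Algebra R K] [IsFractionRing R K] (x : K) (hx : x ≠ 0) :
    {v : HeightOneSpectrum R | v.valuation K x ≠ 1}.Finite := by
  obtain ⟨⟨n, d⟩, hxd⟩ := IsLocalization.surj (nonZeroDivisors R) x
  simp only at hxd
  have hd0 : (d : R) ≠ 0 := nonZeroDivisors.coe_ne_zero d
  have hdK : algebraMap R K d ≠ 0 :=
    (map_ne_zero_iff _ (IsFractionRing.injective R K)).mpr hd0
  have hn0 : n ≠ 0 := by
    intro hn
    rw [hn, map_zero, mul_eq_zero] at hxd
    rcases hxd with h | h
    · exact hx h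
    · exact hdK h
  have hsub : {v : HeightOneSpectrum R | v.valuation K x ≠ 1} ⊆
      {v : HeightOneSpectrum R | v.asIdeal ∣ Ideal.span {n}} ∪
      {v : HeightOneSpectrum R | v.asIdeal ∣ Ideal.span {(d : R)}} := by
    intro v hv
    simp only [Set.mem_setOf_eq] at hv
    by_contra hcon
    simp only [Set.mem_union, Set.mem_setOf_eq] at hcon
    push_neg at hcon
    have h1 : v.valuation K (algebraMap R K n) = 1 := by
      have hle : v.valuation K (algebraMap R K n) ≤ 1 := v.valuation_le_one (K := K) n
      have := (HeightOneSpectrum.valuation_lt_one_iff_dvd (K := K) v n).not.mpr hcon.1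
      exact le_antisymm hle (not_lt.mp this)
    have h2 : v.valuation K (algebraMap R K d) = 1 := by
      have hle : v.valuation K (algebraMap R K (d : R)) ≤ 1 := v.valuation_le_one (K := K) (d : R)
      have := (HeightOneSpectrum.valuation_lt_one_iff_dvd (K := K) v (d : R)).not.mpr hcon.2
      exact le_antisymm hle (not_lt.mp this)
    apply hv
    have : v.valuation K x * v.valuation K (algebraMap R K d) = v.valuation K (algebraMap R K n) := by
      rw [← Valuation.map_mul, hxd]
    rw [h1, h2, mul_one] at this
    exact this
  refine Set.Finite.subset (Set.Finite.union ?_ ?_) hsub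
  · exact Ideal.finite_factors (by simpa [Ideal.span_singleton_eq_bot] using hn0)
  · exact Ideal.finite_factors (by simpa [Ideal.span_singleton_eq_bot] using hd0)

private lemma gwz_mul_lt_mul_right {Γ : Type*} [LinearOrderedCommGroupWithZero Γ]
    {a b c : Γ} (h : a < b) (hc : c ≠ 0) : a * c < b * c := by
  have := mul_lt_mul_of_pos_left h (zero_lt_iff.mpr hc)
  rwa [mul_comm c a, mul_comm c b] at this

theorem nonarch_growth {K Γ : Type*} [Field K] [LinearOrderedCommGroupWithZero Γ]
    (val : Valuation K Γ) (f : K[X]) (hdeg : 2 ≤ f.natDegree) :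
    ∃ t : Γ, 1 ≤ t ∧
      (∀ z : K, t < val z → val z < val (f.eval z)) ∧
      ((val f.leadingCoeff = 1 ∧ ∀ i, val (f.coeff i) ≤ 1) → t = 1) := by
  set d := f.natDegree with hd
  have hf0 : f ≠ 0 := fun h => by simp [h, hd] at hdeg
  have hlc : f.coeff d ≠ 0 := by
    rw [hd, ← leadingCoeff]; exact leadingCoeff_ne_zero.mpr hf0
  have hu0 : val (f.coeff d) ≠ 0 := (Valuation.ne_zero_iff val).mpr hlc
  set u := val (f.coeff d) with hu
  have hne : (range d).Nonempty := ⟨0, mem_range.mpr (by omega)⟩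
  set A : Γ := max 1 ((range d).sup' hne fun i => val (f.coeff i)) with hA
  have hA1 : 1 ≤ A := le_max_left _ _
  refine ⟨max 1 (u⁻¹ * A), le_max_left _ _, ?_, ?_⟩
  · intro z hz
    have hz1 : 1 < val z := lt_of_le_of_lt (le_max_left _ _) hz
    have hz0 : val z ≠ 0 := ne_of_gt (lt_trans zero_lt_one hz1)
    have huz : A < u * val z := by
      have h1 : u⁻¹ * A < val z := lt_of_le_of_lt (le_max_right _ _) hz
      have := mul_lt_mul_of_pos_left h1 (zero_lt_iff.mpr hu0)
      rwa [← mul_assoc, mul_inv_cancel₀ hu0, one_mul] at this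
    have hpow : ∀ i : ℕ, i ≤ d - 1 → val z ^ i ≤ val z ^ (d - 1) :=
      fun i hi => pow_le_pow_right₀ hz1.le hi
    have hkey : ∀ i, i ∈ range (d + 1) → i ≠ d →
        val (f.coeff i * z ^ i) < val (f.coeff d * z ^ d) := by
      intro i hi hid
      rw [mem_range] at hi
      have hilt : i < d := by
        rcases Nat.lt_succ_iff_lt_or_eq.mp hi with h | h
        · exact h
        · exact absurd h hid
      have h1 : val (f.coeff i * z ^ i) ≤ A * val z ^ (d - 1) := by
        rw [Valuation.map_mul, Valuation.map_pow]
        have : val (f.coeff i) ≤ A :=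
          le_trans (Finset.le_sup' (fun i => val (f.coeff i)) (mem_range.mpr hilt)) (le_max_right _ _)
        exact mul_le_mul' this (hpow i (by omega))
      have h2 : A * val z ^ (d - 1) < val (f.coeff d * z ^ d) := by
        rw [Valuation.map_mul, Valuation.map_pow]
        calc A * val z ^ (d - 1)
            < (u * val z) * val z ^ (d - 1) :=
              gwz_mul_lt_mul_right huz (pow_ne_zero _ hz0)
          _ = u * val z ^ d := by rw [mul_assoc, ← pow_succ']; congr 2; omega
      exact lt_of_le_of_lt h1 h2
    have h00 : val (f.coeff d * z ^ d) ≠ 0 := by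
      rw [Valuation.map_mul, Valuation.map_pow]
      exact mul_ne_zero hu0 (pow_ne_zero _ hz0)
    have heval : val (f.eval z) = val (f.coeff d * z ^ d) := by
      rw [eval_eq_sum_range]
      refine Valuation.map_sum_eq_of_lt val (j := d) (mem_range.mpr (by omega)) ?_
      intro i hi
      have hi2 : i < f.natDegree + 1 ∧ ¬ i = f.natDegree := by simpa [Finset.mem_sdiff] using hi
      exact hkey i (by simpa [hd] using hi2.1) (by simpa [hd] using hi2.2)
    rw [heval, Valuation.map_mul, Valuation.map_pow]
    calc val z ≤ val z ^ (d - 1) := le_self_pow₀ hz1.le (by omega)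
      _ = 1 * val z ^ (d - 1) := (one_mul _).symm
      _ < (u * val z) * val z ^ (d - 1) :=
          gwz_mul_lt_mul_right (lt_of_le_of_lt hA1 huz) (pow_ne_zero _ hz0)
      _ = u * val z ^ d := by rw [mul_assoc, ← pow_succ']; congr 2; omega
  · rintro ⟨h1, h2⟩
    have hAone : A = 1 := by
      rw [hA]
      exact max_eq_left (Finset.sup'_le _ _ fun i _ => h2 i)
    have hu1 : u = 1 := by rw [hu, hd, ← leadingCoeff]; exact h1
    rw [hAone, hu1, inv_one, one_mul, max_self]

theorem arch_growth (g : Polynomial ℂ) (hdeg : 2 ≤ g.natDegree) (c : ℝ) :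
    ∃ B : ℝ, c ≤ B ∧ ∀ z : ℂ, B < ‖z‖ → B < ‖g.eval z‖ := by
  set d := g.natDegree with hd
  have hg0 : g ≠ 0 := fun h => by simp [h, hd] at hdeg
  have hlc : g.coeff d ≠ 0 := by rw [hd, ← leadingCoeff]; exact leadingCoeff_ne_zero.mpr hg0
  have hlcn : (0:ℝ) < ‖g.coeff d‖ := norm_pos_iff.mpr hlc
  set M : ℝ := ∑ i ∈ range d, ‖g.coeff i‖ with hM
  have hM0 : 0 ≤ M := Finset.sum_nonneg fun i _ => norm_nonneg _
  refine ⟨max c (max 1 ((M + 1) / ‖g.coeff d‖)), le_max_left _ _, ?_⟩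
  intro z hz
  set B := max c (max 1 ((M + 1) / ‖g.coeff d‖)) with hB
  have hz1 : (1:ℝ) ≤ ‖z‖ := le_of_lt (lt_of_le_of_lt (le_trans (le_max_left _ _) (le_max_right _ _)) hz)
  have hzM : (M + 1) / ‖g.coeff d‖ ≤ ‖z‖ :=
    le_of_lt (lt_of_le_of_lt (le_trans (le_max_right _ _) (le_max_right _ _)) hz)
  have hzM' : M + 1 ≤ ‖g.coeff d‖ * ‖z‖ := by
    rw [div_le_iff₀ hlcn] at hzM; linarith [hzM]
  have hsplit : g.eval z = (∑ i ∈ range d, g.coeff i * z ^ i) + g.coeff d * z ^ d := by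
    rw [eval_eq_sum_range, Finset.sum_range_succ]
  set s := ∑ i ∈ range d, g.coeff i * z ^ i with hs
  have hpow : ∀ i : ℕ, i < d → ‖z‖ ^ i ≤ ‖z‖ ^ (d - 1) :=
    fun i hi => pow_le_pow_right₀ hz1 (by omega)
  have hsbound : ‖s‖ ≤ M * ‖z‖ ^ (d - 1) := by
    calc ‖s‖ ≤ ∑ i ∈ range d, ‖g.coeff i * z ^ i‖ := norm_sum_le _ _
      _ ≤ ∑ i ∈ range d, ‖g.coeff i‖ * ‖z‖ ^ (d - 1) := by
          refine Finset.sum_le_sum fun i hi => ?_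
          rw [norm_mul, norm_pow]
          exact mul_le_mul_of_nonneg_left (hpow i (mem_range.mp hi)) (norm_nonneg _)
      _ = M * ‖z‖ ^ (d - 1) := by rw [← Finset.sum_mul]
  have htbound : (M + 1) * ‖z‖ ^ (d - 1) ≤ ‖g.coeff d * z ^ d‖ := by
    rw [norm_mul, norm_pow]
    have hdd : ‖z‖ ^ d = ‖z‖ * ‖z‖ ^ (d - 1) := by
      rw [← pow_succ']; congr 1; omega
    rw [hdd, ← mul_assoc]
    exact mul_le_mul_of_nonneg_right hzM' (by positivity)
  have hlow : ‖z‖ ^ (d - 1) ≤ ‖g.eval z‖ := by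
    have h1 : ‖g.coeff d * z ^ d‖ = ‖g.eval z - s‖ := by rw [hsplit]; congr 1; ring
    have h2 : ‖g.eval z - s‖ ≤ ‖g.eval z‖ + ‖s‖ := norm_sub_le _ _
    nlinarith [hsbound, htbound, h1, h2]
  have : ‖z‖ ≤ ‖z‖ ^ (d - 1) := le_self_pow₀ hz1 (by omega)
  linarith
theorem backward_orbit_finite {K : Type*} [Field K] [NumberField K]
    (f : K[X]) (hdeg : 2 ≤ f.natDegree) (β : K) :
    {α : K | ∃ k : ℕ, f.eval^[k] α = β}.Finite := by
  classical
  set R := NumberField.RingOfIntegers K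
  set P := {α : K | ∃ k : ℕ, f.eval^[k] α = β} with hP
  -- archimedean bounds
  have harch : ∀ φ : K →+* ℂ, ∃ B : ℝ, ‖φ β‖ ≤ B ∧
      ∀ z : K, B < ‖φ z‖ → B < ‖φ (f.eval z)‖ := by
    intro φ
    have hmapdeg : 2 ≤ (f.map φ).natDegree := by
      rwa [natDegree_map_eq_of_injective φ.injective]
    obtain ⟨B, hB1, hB2⟩ := arch_growth (f.map φ) hmapdeg ‖φ β‖
    refine ⟨B, hB1, fun z hz => ?_⟩
    have : φ (f.eval z) = (f.map φ).eval (φ z) := by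
      rw [eval_map, eval₂_at_apply]
    rw [this]
    exact hB2 (φ z) hz
  choose B hB1 hB2 using harch
  have harchP : ∀ α ∈ P, ∀ φ : K →+* ℂ, ‖φ α‖ ≤ B φ := by
    rintro α ⟨k, hk⟩ φ
    by_contra hcon
    push_neg at hcon
    have ind : ∀ j, B φ < ‖φ (f.eval^[j] α)‖ := by
      intro j
      induction j with
      | zero => simpa using hcon
      | succ j ih =>
        rw [Function.iterate_succ_apply']
        exact hB2 φ _ ih
    have := ind k
    rw [hk] at this
    exact absurd (hB1 φ) (not_le.mpr this)
  -- nonarchimedean bounds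
  have hnon : ∀ v : HeightOneSpectrum R, ∃ t : WithZero (Multiplicative ℤ), 1 ≤ t ∧
      (∀ z : K, t < v.valuation K z → v.valuation K z < v.valuation K (f.eval z)) ∧
      ((v.valuation K f.leadingCoeff = 1 ∧ ∀ i, v.valuation K (f.coeff i) ≤ 1) → t = 1) :=
    fun v => nonarch_growth (v.valuation K) f hdeg
  choose t ht1 ht2 ht3 using hnon
  set Γ : HeightOneSpectrum R → WithZero (Multiplicative ℤ) :=
    fun v => max (t v) (v.valuation K β) with hΓ
  have hΓ1 : ∀ v, 1 ≤ Γ v := fun v => le_trans (ht1 v) (le_max_left _ _)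
  have hΓ0 : ∀ v, Γ v ≠ 0 := fun v => ne_of_gt (lt_of_lt_of_le zero_lt_one (hΓ1 v))
  have hnonP : ∀ α ∈ P, ∀ v, v.valuation K α ≤ Γ v := by
    rintro α ⟨k, hk⟩ v
    by_contra hcon
    push_neg at hcon
    have ind : ∀ j, Γ v < v.valuation K (f.eval^[j] α) := by
      intro j
      induction j with
      | zero => simpa using hcon
      | succ j ih =>
        rw [Function.iterate_succ_apply']
        have h1 : t v < v.valuation K (f.eval^[j] α) := lt_of_le_of_lt (le_max_left _ _) ih
        exact lt_trans ih (ht2 v _ h1)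
    have := ind k
    rw [hk] at this
    exact absurd (le_max_right (t v) (v.valuation K β)) (not_le.mpr this)
  -- the set of bad places is finite
  have hgoodΓ : ∀ v : HeightOneSpectrum R,
      (v.valuation K f.leadingCoeff = 1 ∧ (∀ i, v.valuation K (f.coeff i) ≤ 1) ∧
        v.valuation K β ≤ 1) → Γ v = 1 := by
    rintro v ⟨h1, h2, h3⟩
    rw [hΓ]
    simp only
    rw [ht3 v ⟨h1, h2⟩]
    exact max_eq_left h3
  have hfinaux : ∀ x : K, {v : HeightOneSpectrum R | v.valuation K x ≠ 1 ∧ x ≠ 0}.Finite := by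
    intro x
    by_cases hx : x = 0
    · simp [hx]
    · exact (finite_valuation_ne_one x hx).subset (fun v hv => hv.1)
  set Sb := {v : HeightOneSpectrum R | ¬ (v.valuation K f.leadingCoeff = 1 ∧
      (∀ i, v.valuation K (f.coeff i) ≤ 1) ∧ v.valuation K β ≤ 1)} with hSb
  have hSbfin : Sb.Finite := by
    have hsub : Sb ⊆ {v : HeightOneSpectrum R | v.valuation K f.leadingCoeff ≠ 1 ∧
          f.leadingCoeff ≠ 0} ∪
        (⋃ i ∈ Finset.range (f.natDegree + 1),
          {v : HeightOneSpectrum R | v.valuation K (f.coeff i) ≠ 1 ∧ f.coeff i ≠ 0}) ∪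
        {v : HeightOneSpectrum R | v.valuation K β ≠ 1 ∧ β ≠ 0} := by
      intro v hv
      by_contra hcon
      simp only [Set.mem_union, Set.mem_iUnion, not_or, not_exists, Set.mem_setOf_eq] at hcon
      push_neg at hcon
      obtain ⟨⟨hc1, hc2⟩, hc3⟩ := hcon
      apply hv
      have hf0 : f ≠ 0 := fun h => by simp [h] at hdeg
      refine ⟨?_, ?_, ?_⟩
      · by_contra h
        exact (leadingCoeff_ne_zero.mpr hf0) (hc1 h)
      · intro i
        by_cases hi : i ≤ f.natDegree
        · by_cases hci : f.coeff i = 0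
          · simp [hci]
          · refine le_of_eq ?_
            by_contra h
            exact hci (hc2 i (Finset.mem_range.mpr (by omega)) h)
        · rw [coeff_eq_zero_of_natDegree_lt (by omega)]
          simp
      · by_cases hβ : β = 0
        · simp [hβ]
        · refine le_of_eq ?_
          by_contra h
          exact hβ (hc3 h)
    refine Set.Finite.subset ?_ hsub
    refine Set.Finite.union (Set.Finite.union (hfinaux _) ?_) (hfinaux _)
    exact Set.Finite.biUnion (Finset.range (f.natDegree + 1)).finite_toSet
      (fun i _ => hfinaux _)
  -- construct a denominator-clearing element q
  set T := hSbfin.toFinset with hT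
  have hm : ∀ v : HeightOneSpectrum R, ∃ m : ℕ,
      ((Multiplicative.ofAdd (-(m : ℤ)) : Multiplicative ℤ) : WithZero (Multiplicative ℤ)) *
        Γ v ≤ 1 := by
    intro v
    obtain ⟨γ, hγ⟩ := WithZero.ne_zero_iff_exists.mp (hΓ0 v)
    refine ⟨(Multiplicative.toAdd γ).toNat, ?_⟩
    rw [← hγ, ← WithZero.coe_mul, ← WithZero.coe_one, WithZero.coe_le_coe]
    rw [show γ = Multiplicative.ofAdd (Multiplicative.toAdd γ) by simp, ← ofAdd_add]
    rw [show (1 : Multiplicative ℤ) = Multiplicative.ofAdd (0 : ℤ) by rfl]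
    rw [Multiplicative.ofAdd_le]
    simp only [ofAdd_toAdd]
    omega
  choose m hm using hm
  have hIne : (∏ v ∈ T, v.asIdeal ^ (m v)) ≠ ⊥ := by
    rw [← Ideal.zero_eq_bot, Finset.prod_ne_zero_iff]
    intro v _
    apply pow_ne_zero
    rw [Ideal.zero_eq_bot]
    exact v.ne_bot
  obtain ⟨q, hqI, hq0⟩ := Submodule.exists_mem_ne_zero_of_ne_bot hIne
  set qK := algebraMap R K q with hqK
  have hqK0 : qK ≠ 0 := (map_ne_zero_iff _ (IsFractionRing.injective R K)).mpr hq0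
  have hqval : ∀ v ∈ T, v.valuation K qK ≤
      ((Multiplicative.ofAdd (-(m v : ℤ)) : Multiplicative ℤ) : WithZero (Multiplicative ℤ)) := by
    intro v hv
    have hdvd : v.asIdeal ^ (m v) ∣ Ideal.span {q} := by
      refine dvd_trans (Finset.dvd_prod_of_mem (fun v => v.asIdeal ^ (m v)) hv) ?_
      rw [Ideal.dvd_iff_le]
      exact Ideal.span_le.mpr (Set.singleton_subset_iff.mpr hqI)
    rw [hqK, HeightOneSpectrum.valuation_of_algebraMap, HeightOneSpectrum.intValuation_apply]
    exact (HeightOneSpectrum.intValuation_le_pow_iff_dvd v q (m v)).mpr hdvd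
  have hqΓ : ∀ v ∈ T, v.valuation K qK * Γ v ≤ 1 := by
    intro v hv
    exact le_trans (mul_le_mul_left (hqval v hv) _) (hm v)
  have hqK1 : ∀ v : HeightOneSpectrum R, v.valuation K qK ≤ 1 := by
    intro v
    rw [hqK]
    exact HeightOneSpectrum.valuation_le_one v q
  -- assemble
  set C : ℝ := ∑ φ : K →+* ℂ, ‖φ qK‖ * B φ with hC
  have hBpos : ∀ φ : K →+* ℂ, 0 ≤ B φ := fun φ => le_trans (norm_nonneg _) (hB1 φ)
  have hCle : ∀ φ : K →+* ℂ, ‖φ qK‖ * B φ ≤ C := by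
    intro φ
    exact Finset.single_le_sum (f := fun ψ : K →+* ℂ => ‖ψ qK‖ * B ψ)
      (fun ψ _ => mul_nonneg (norm_nonneg _) (hBpos ψ)) (Finset.mem_univ φ)
  have hsub : P ⊆ (fun α : K => qK * α) ⁻¹'
      {x : K | IsIntegral ℤ x ∧ ∀ φ : K →+* ℂ, ‖φ x‖ ≤ C} := by
    intro α hα
    constructor
    · apply isIntegral_of_valuation_le_one
      intro v
      rw [Valuation.map_mul]
      by_cases hv : v ∈ T
      · exact le_trans (mul_le_mul_right (hnonP α hα v) _) (hqΓ v hv)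
      · have hvg : v ∉ Sb := fun h => hv (hSbfin.mem_toFinset.mpr h)
        have hgood : v.valuation K f.leadingCoeff = 1 ∧
            (∀ i, v.valuation K (f.coeff i) ≤ 1) ∧ v.valuation K β ≤ 1 := by
          by_contra h
          exact hvg h
        have hΓv1 : Γ v = 1 := hgoodΓ v hgood
        have := hnonP α hα v
        rw [hΓv1] at this
        exact mul_le_one' (hqK1 v) this
    · intro φ
      simp only [Set.mem_setOf_eq, map_mul, norm_mul]
      exact le_trans (mul_le_mul_of_nonneg_left (harchP α hα φ) (norm_nonneg _)) (hCle φ)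
  refine Set.Finite.subset ?_ hsub
  exact Set.Finite.preimage ((mul_right_injective₀ hqK0).injOn)
    (NumberField.Embeddings.finite_of_norm_le K ℂ C)

/-- `x` is an `S`-integer of the number field `K`: its valuation is non-negative
(multiplicatively, `≤ 1`) at every finite place outside `S`. -/
def IsSInteger (K : Type*) [Field K] [NumberField K]
    (S : Finset (HeightOneSpectrum (NumberField.RingOfIntegers K))) (x : K) : Prop :=
  ∀ v : HeightOneSpectrum (NumberField.RingOfIntegers K), v ∉ S → v.valuation K x ≤ 1

theorem stmt_7 (K : Type*) [Field K] [NumberField K]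
    (S : Finset (HeightOneSpectrum (NumberField.RingOfIntegers K)))
    (f : Polynomial K) (hdeg : 2 ≤ f.natDegree)
    (hV : {α : K | ∃ (n : ℕ) (ℓ : ℤ) (a : K), 1 ≤ n ∧ ℓ ≠ 0 ∧ ℓ ≠ 1 ∧
      IsSInteger K S a ∧ (ℓ < 0 → a ≠ 0) ∧ f.eval^[n] α = a ^ ℓ * α}.Finite) :
    {α : K | ∃ (n k : ℕ) (ℓ : ℤ) (a : K), 1 ≤ n ∧ ℓ ≠ 0 ∧ ℓ ≠ 1 ∧
      IsSInteger K S a ∧ (ℓ < 0 → a ≠ 0) ∧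
      f.eval^[n + k] α = a ^ ℓ * f.eval^[k] α}.Finite := by
  have key : ∀ β : K, {α : K | ∃ k : ℕ, f.eval^[k] α = β}.Finite :=
    fun β => backward_orbit_finite f hdeg β
  refine Set.Finite.subset (Set.Finite.biUnion hV (fun β _ => key β)) ?_
  rintro α ⟨n, k, ℓ, a, hn, hl0, hl1, hsa, hneg, heq⟩
  have hβV : f.eval^[k] α ∈ {α : K | ∃ (n : ℕ) (ℓ : ℤ) (a : K), 1 ≤ n ∧ ℓ ≠ 0 ∧ ℓ ≠ 1 ∧
      IsSInteger K S a ∧ (ℓ < 0 → a ≠ 0) ∧ f.eval^[n] α = a ^ ℓ * α} :=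
    ⟨n, ℓ, a, hn, hl0, hl1, hsa, hneg, by
      rw [← Function.iterate_add_apply]; exact heq⟩
  have hmem : α ∈ {x : K | ∃ j : ℕ, f.eval^[j] x = f.eval^[k] α} := ⟨k, rfl⟩
  exact Set.mem_biUnion hβV hmem
end

section
/- Let K be a field equipped with a discrete additive valuation v : K → ℤ ∪ {∞}. Let f(X) = c_0 + c_1 X + ⋯ + c_d X^d ∈ K[X] with d ≥ 2, v(c_i) ≥ 0 for all i = 0, …, d, and v(c_d) = 0. Suppose α ∈ K, a ∈ K with v(a) ≥ 0, ℓ ≥ 0 an integer, and n ≥ 1 an integer satisfy f^(n)(α) = a^ℓ · α. Then v(α) ≥ 0. -/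
open Polynomial

private lemma addval_add_eq_of_lt {K : Type*} [Field K] (v : AddValuation K (WithTop ℤ))
    {x y : K} (h : v y < v x) : v (x + y) = v y := by
  refine le_antisymm ?_ ?_
  · by_contra hlt
    push_neg at hlt
    have h2 : v y = v ((x + y) + (-x)) := by ring_nf
    have h3 : min (v (x + y)) (v (-x)) ≤ v y := h2 ▸ v.map_add _ _
    have hneg : v (-x) = v x := Valuation.map_neg v x
    rw [hneg] at h3
    rcases min_le_iff.mp h3 with h4 | h4
    · exact absurd (lt_of_lt_of_le hlt h4) (lt_irrefl _)
    · exact absurd (lt_of_lt_of_le h h4) (lt_irrefl _)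
  · have := v.map_add x y
    rwa [min_eq_right h.le] at this

private lemma withtop_nsmul_coe (n : ℕ) (m : ℤ) :
    n • ((m : WithTop ℤ)) = (((n : ℤ) * m : ℤ) : WithTop ℤ) := by
  rw [← WithTop.coe_nsmul, nsmul_eq_mul]

private lemma addval_step {K : Type*} [Field K] (v : AddValuation K (WithTop ℤ))
    {f : Polynomial K} {d : ℕ} (hd : 2 ≤ d)
    (hdeg : f.natDegree = d) (hcoeff : ∀ i, 0 ≤ v (f.coeff i))
    (hlead : v (f.coeff d) = 0) {x : K} (hx : v x < 0) :
    v (f.eval x) < v x := by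
  obtain ⟨m, hm⟩ : ∃ m : ℤ, v x = (m : WithTop ℤ) := by
    cases hvx : v x with
    | top => rw [hvx] at hx; exact absurd hx (by simp)
    | coe m => exact ⟨m, rfl⟩
  have hmneg : m < 0 := by rwa [hm, ← WithTop.coe_zero, WithTop.coe_lt_coe] at hx
  have heval : f.eval x = (∑ i ∈ Finset.range d, f.coeff i * x ^ i) + f.coeff d * x ^ d := by
    rw [eval_eq_sum_range, hdeg, Finset.sum_range_succ]
  have hT : v (f.coeff d * x ^ d) = ((d * m : ℤ) : WithTop ℤ) := by
    rw [v.map_mul, hlead, v.map_pow, hm, zero_add, withtop_nsmul_coe]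
  have hS : ((d * m : ℤ) : WithTop ℤ) < v (∑ i ∈ Finset.range d, f.coeff i * x ^ i) := by
    apply v.map_lt_sum WithTop.coe_ne_top
    intro i hi
    rw [Finset.mem_range] at hi
    have : ((d * m : ℤ) : WithTop ℤ) < ((i * m : ℤ) : WithTop ℤ) := by
      rw [WithTop.coe_lt_coe]
      have : (i : ℤ) < (d : ℤ) := by exact_mod_cast hi
      nlinarith
    refine lt_of_lt_of_le this ?_
    rw [v.map_mul, v.map_pow, hm]
    rw [← withtop_nsmul_coe]
    calc i • (m : WithTop ℤ) = 0 + i • (m : WithTop ℤ) := by rw [zero_add]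
      _ ≤ v (f.coeff i) + i • (m : WithTop ℤ) := add_le_add_left (hcoeff i) _
  have hsum : v (f.eval x) = ((d * m : ℤ) : WithTop ℤ) := by
    rw [heval, addval_add_eq_of_lt v (by rw [hT]; exact hS), hT]
  rw [hsum, hm, WithTop.coe_lt_coe]
  nlinarith

theorem stmt_16 (K : Type*) [Field K] (v : AddValuation K (WithTop ℤ))
    (hsurj : Function.Surjective v) (f : Polynomial K) (d : ℕ) (hd : 2 ≤ d)
    (hdeg : f.natDegree = d) (hcoeff : ∀ i, 0 ≤ v (f.coeff i))
    (hlead : v (f.coeff d) = 0) (α a : K) (hva : 0 ≤ v a)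
    (ℓ : ℤ) (hℓ : 0 ≤ ℓ) (n : ℕ) (hn : 1 ≤ n)
    (heq : f.eval^[n] α = a ^ ℓ * α) :
    0 ≤ v α := by
  by_contra hneg
  push_neg at hneg
  have key : ∀ k : ℕ, v (f.eval^[k + 1] α) < v α := by
    intro k
    induction k with
    | zero => simpa using addval_step v hd hdeg hcoeff hlead hneg
    | succ k ih =>
      rw [Function.iterate_succ_apply']
      exact lt_trans (addval_step v hd hdeg hcoeff hlead (lt_trans ih hneg)) ih
  have hlow : v (f.eval^[n] α) < v α := by
    obtain ⟨k, rfl⟩ := Nat.exists_eq_add_of_le hn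
    rw [add_comm]
    exact key k
  have hzpow : 0 ≤ v (a ^ ℓ) := by
    lift ℓ to ℕ using hℓ
    rw [zpow_natCast, v.map_pow]
    exact nsmul_nonneg hva _
  have : v α ≤ v (f.eval^[n] α) := by
    rw [heq, v.map_mul]
    calc v α = 0 + v α := (zero_add _).symm
      _ ≤ v (a ^ ℓ) + v α := add_le_add_left hzpow _
  exact absurd (lt_of_le_of_lt this hlow) (lt_irrefl _)
end

section
/- Let K be a field equipped with a discrete additive valuation v : K → ℤ ∪ {∞}. Let f ∈ K[X] be a polynomial of degree d ≥ 2 all of whose coefficients have non-negative v-valuation. Suppose n ≥ 1 is an integer, α ∈ K satisfies v(α) > 0, a ∈ K satisfies v(a) ≥ 0, and ℓ ≥ 1 is an integer such that f^(n)(α) = a^ℓ · α. Then v(f^(n)(0)) > 0. -/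
open Polynomial

private lemma eval_nonneg {K : Type*} [Field K] (v : AddValuation K (WithTop ℤ))
    (f : Polynomial K) (hcoeff : ∀ i, 0 ≤ v (f.coeff i)) {x : K} (hx : 0 ≤ v x) :
    0 ≤ v (f.eval x) := by
  rw [Polynomial.eval_eq_sum_range]
  refine v.map_le_sum fun i _ => ?_
  rw [v.map_mul, v.map_pow]
  exact add_nonneg (hcoeff i) (nsmul_nonneg hx i)

private lemma eval_sub_pos {K : Type*} [Field K] (v : AddValuation K (WithTop ℤ))
    (f : Polynomial K) (hcoeff : ∀ i, 0 ≤ v (f.coeff i)) {x y : K}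
    (hx : 0 ≤ v x) (hy : 0 ≤ v y) (hxy : 0 < v (x - y)) :
    0 < v (f.eval x - f.eval y) := by
  have hxy' : x - y = -(y - x) := by ring
  have key : f.eval x - f.eval y =
      ∑ i ∈ Finset.range (f.natDegree + 1), f.coeff i * (x ^ i - y ^ i) := by
    rw [Polynomial.eval_eq_sum_range, Polynomial.eval_eq_sum_range, ← Finset.sum_sub_distrib]
    congr 1; ext i; ring
  rw [key]
  refine v.map_lt_sum' (by simp) fun i _ => ?_
  rw [v.map_mul]
  have hgi : x ^ i - y ^ i = (∑ j ∈ Finset.range i, x ^ j * y ^ (i - 1 - j)) * (x - y) :=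
    (geom_sum₂_mul x y i).symm
  have hs : 0 ≤ v (∑ j ∈ Finset.range i, x ^ j * y ^ (i - 1 - j)) := by
    refine v.map_le_sum fun j _ => ?_
    rw [v.map_mul, v.map_pow, v.map_pow]
    exact add_nonneg (nsmul_nonneg hx j) (nsmul_nonneg hy _)
  have : 0 < v (x ^ i - y ^ i) := by
    rw [hgi, v.map_mul]
    exact lt_of_lt_of_le hxy (le_add_of_nonneg_left hs)
  exact lt_of_lt_of_le this (le_add_of_nonneg_left (hcoeff i))

theorem stmt_17 (K : Type*) [Field K] (v : AddValuation K (WithTop ℤ))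
    (hsurj : Function.Surjective v) (f : Polynomial K) (hdeg : 2 ≤ f.natDegree)
    (hcoeff : ∀ i, 0 ≤ v (f.coeff i)) (n : ℕ) (hn : 1 ≤ n)
    (α : K) (hα : 0 < v α) (a : K) (hva : 0 ≤ v a)
    (ℓ : ℤ) (hℓ : 1 ≤ ℓ) (heq : f.eval^[n] α = a ^ ℓ * α) :
    0 < v (f.eval^[n] (0 : K)) := by
  -- nonnegativity of iterates
  have hiter : ∀ (m : ℕ) (x : K), 0 ≤ v x → 0 ≤ v (f.eval^[m] x) := by
    intro m
    induction m with
    | zero => intro x hx; simpa using hx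
    | succ m ih =>
      intro x hx
      rw [Function.iterate_succ_apply']
      exact eval_nonneg v f hcoeff (ih x hx)
  -- the difference has positive valuation
  have hdiff : ∀ m : ℕ, 0 < v (f.eval^[m] α - f.eval^[m] (0 : K)) := by
    intro m
    induction m with
    | zero => simpa using hα
    | succ m ih =>
      rw [Function.iterate_succ_apply', Function.iterate_succ_apply']
      exact eval_sub_pos v f hcoeff (hiter m α hα.le) (hiter m 0 (by simp)) ih
  -- v (f^[n] α) > 0
  have hpow : 0 ≤ v (a ^ ℓ) := by
    have : a ^ ℓ = a ^ ℓ.toNat := by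
      rw [← zpow_natCast, Int.toNat_of_nonneg (by omega)]
    rw [this, v.map_pow]
    exact nsmul_nonneg hva _
  have hvn : 0 < v (f.eval^[n] α) := by
    rw [heq, v.map_mul]
    exact lt_of_lt_of_le hα (le_add_of_nonneg_left hpow)
  -- conclude
  have : f.eval^[n] (0 : K) = f.eval^[n] α + -(f.eval^[n] α - f.eval^[n] (0 : K)) := by ring
  rw [this]
  exact v.map_lt_add hvn (by rw [v.map_neg]; exact hdiff n)
end

section
/- Let K be a number field and f ∈ K[X] a polynomial of degree d ≥ 2. Then the set {α ∈ K : f^(k)(α) = 0 for some integer k ≥ 1} is finite. -/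
open Polynomial IsDedekindDomain IsDedekindDomain.HeightOneSpectrum UniqueFactorizationMonoid

theorem mem_int_of_val_le_one {R : Type*} [CommRing R] [IsDedekindDomain R]
    {K : Type*} [Field K] [Algebra R K] [IsFractionRing R K] (x : K)
    (h : ∀ v : HeightOneSpectrum R, v.valuation K x ≤ 1) :
    ∃ r : R, algebraMap R K r = x := by
  classical
  obtain ⟨a, b, hb, rfl⟩ := IsFractionRing.div_surjective (A := R) x
  have hb0 : b ≠ 0 := nonZeroDivisors.ne_zero hb
  have hbK : algebraMap R K b ≠ 0 := IsFractionRing.to_map_ne_zero_of_mem_nonZeroDivisors hb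
  suffices hba : b ∣ a by
    obtain ⟨t, rfl⟩ := hba
    refine ⟨t, ?_⟩
    rw [map_mul]
    field_simp
  by_cases ha : a = 0
  · simp [ha]
  rw [← Ideal.span_singleton_le_span_singleton, ← Ideal.dvd_iff_le]
  have hsa : Ideal.span {a} ≠ (0 : Ideal R) := by
    simpa only [ne_eq, Ideal.zero_eq_bot, Ideal.span_singleton_eq_bot] using ha
  have hsb : Ideal.span {b} ≠ (0 : Ideal R) := by
    simpa only [ne_eq, Ideal.zero_eq_bot, Ideal.span_singleton_eq_bot] using hb0
  rw [dvd_iff_normalizedFactors_le_normalizedFactors hsb hsa, Multiset.le_iff_count]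
  intro P
  by_cases hP : P ∈ normalizedFactors (Ideal.span {b})
  swap
  · simp [Multiset.count_eq_zero_of_notMem hP]
  have hPirr : Irreducible P := irreducible_of_normalized_factor _ hP
  have hPprime : Prime P := prime_of_normalized_factor _ hP
  set v : HeightOneSpectrum R :=
    ⟨P, Ideal.isPrime_of_prime hPprime, by simpa using hPprime.ne_zero⟩ with hv
  set n := (normalizedFactors (Ideal.span {b})).count P with hn
  have hnormP : normalize P = P := normalize_eq P
  have h1 : P ^ n ∣ Ideal.span {b} := by
    rw [pow_dvd_iff_le_emultiplicity,
      emultiplicity_eq_count_normalizedFactors hPirr hsb, hnormP]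
  have h2 : v.intValuationDef b ≤ Multiplicative.ofAdd (-(n : ℤ)) :=
    (v.intValuation_le_pow_iff_dvd b n).mpr h1
  have h3 : v.intValuation a ≤ v.intValuation b := by
    have hab := h v
    rw [map_div₀, valuation_of_algebraMap, valuation_of_algebraMap] at hab
    have hbne : v.intValuation b ≠ 0 := v.intValuation_ne_zero b hb0
    rwa [div_le_one₀ (lt_of_le_of_ne (zero_le') (Ne.symm hbne))] at hab
  have h4 : P ^ n ∣ Ideal.span {a} := by
    apply (v.intValuation_le_pow_iff_dvd a n).mp
    exact le_trans h3 h2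
  rw [← hnormP, ← Nat.cast_le (α := ℕ∞),
    ← emultiplicity_eq_count_normalizedFactors hPirr hsa,
    ← pow_dvd_iff_le_emultiplicity]
  exact h4



theorem val_le_of_iter_eq_zero {K : Type*} [Field K] {Γ₀ : Type*}
    [LinearOrderedCommGroupWithZero Γ₀]
    (γ : Valuation K Γ₀) (f : Polynomial K) (hdeg : 2 ≤ f.natDegree)
    {T : Γ₀} (hT : ∀ i < f.natDegree, γ (f.coeff i) ≤ T)
    {β : K} {k : ℕ} (h0 : f.eval^[k] β = 0) :
    γ β ≤ 1 ∨ γ (f.coeff f.natDegree) * γ β ≤ 1 ∨ γ (f.coeff f.natDegree) * γ β ≤ T := by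
  set d := f.natDegree with hd
  set L := γ (f.coeff d) with hLdef
  by_contra hcon
  push_neg at hcon
  obtain ⟨hb1, hb2, hb3⟩ := hcon
  have hd1 : d - 1 + 1 = d := by omega
  have key : ∀ x : K, 1 < γ x → 1 < L * γ x → T < L * γ x →
      1 < γ (f.eval x) ∧ 1 < L * γ (f.eval x) ∧ T < L * γ (f.eval x) := by
    intro x hx1 hx2 hx3
    have hxpow : (γ x) ^ (d - 1) ≠ 0 := pow_ne_zero _ (ne_of_gt (lt_trans zero_lt_one hx1))
    have hEval : f.eval x = (∑ i ∈ Finset.range d, f.coeff i * x ^ i) + f.coeff d * x ^ d := by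
      rw [eval_eq_sum_range, Finset.sum_range_succ]
    have hsmall : γ (∑ i ∈ Finset.range d, f.coeff i * x ^ i) ≤ T * γ x ^ (d - 1) := by
      apply Valuation.map_sum_le
      intro i hi
      have hi' : i < d := Finset.mem_range.mp hi
      rw [map_mul, map_pow]
      exact mul_le_mul' (hT i hi') (pow_le_pow_right' hx1.le (by omega : i ≤ d - 1))
    have hbig : γ (f.coeff d * x ^ d) = L * γ x * γ x ^ (d - 1) := by
      have hxd : γ x ^ d = γ x ^ (d - 1) * γ x := by rw [← pow_succ, hd1]
      rw [map_mul, map_pow, hxd, ← hLdef, mul_comm (γ x ^ (d - 1)) (γ x), ← mul_assoc]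
    have hxpos : (0 : Γ₀) < γ x ^ (d - 1) := zero_lt_iff.mpr hxpow
    have hlt : T * γ x ^ (d - 1) < L * γ x * γ x ^ (d - 1) :=
      (mul_lt_mul_iff_left₀ hxpos).mpr hx3
    have heval : γ (f.eval x) = L * γ x * γ x ^ (d - 1) := by
      rw [hEval, γ.map_add_eq_of_lt_right (hbig ▸ lt_of_le_of_lt hsmall hlt), hbig]
    have hgt : γ x < γ (f.eval x) := by
      rw [heval]
      calc γ x = 1 * γ x ^ 1 := by rw [one_mul, pow_one]
        _ ≤ 1 * γ x ^ (d - 1) := by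
            exact mul_le_mul' le_rfl (pow_le_pow_right' hx1.le (by omega))
        _ < L * γ x * γ x ^ (d - 1) := (mul_lt_mul_iff_left₀ hxpos).mpr hx2
    exact ⟨lt_trans hx1 hgt, lt_of_lt_of_le hx2 (mul_le_mul_right hgt.le L),
      lt_of_lt_of_le hx3 (mul_le_mul_right hgt.le L)⟩
  have hiter : ∀ j : ℕ, 1 < γ (f.eval^[j] β) ∧ 1 < L * γ (f.eval^[j] β) ∧
      T < L * γ (f.eval^[j] β) := by
    intro j
    induction j with
    | zero => exact ⟨hb1, hb2, hb3⟩
    | succ j ih =>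
      rw [Function.iterate_succ_apply']
      exact key _ ih.1 ih.2.1 ih.2.2
  have := (hiter k).1
  rw [h0, map_zero] at this
  exact absurd this (by simp)



theorem norm_le_of_iter_eq_zero {K : Type*} [Field K] (φ : K →+* ℂ) (f : Polynomial K)
    (hdeg : 2 ≤ f.natDegree) {β : K} {k : ℕ} (h0 : f.eval^[k] β = 0) :
    ‖φ β‖ ≤ max 1 ((1 + ∑ i ∈ Finset.range f.natDegree, ‖φ (f.coeff i)‖) /
      ‖φ (f.coeff f.natDegree)‖) := by
  have hf0 : f ≠ 0 := by
    intro h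
    rw [h, Polynomial.natDegree_zero] at hdeg
    omega
  have hcd : f.coeff f.natDegree ≠ 0 := by
    simpa [Polynomial.coeff_natDegree] using Polynomial.leadingCoeff_ne_zero.mpr hf0
  set d := f.natDegree with hd
  set A := ∑ i ∈ Finset.range d, ‖φ (f.coeff i)‖ with hA
  set Ld := ‖φ (f.coeff d)‖ with hLd
  set C := max 1 ((1 + A) / Ld) with hC
  have hLdpos : 0 < Ld := by
    rw [hLd]
    exact norm_pos_iff.mpr ((map_ne_zero φ).mpr hcd)
  have hApos : 0 ≤ A := Finset.sum_nonneg fun i _ => norm_nonneg _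
  by_contra hcon
  push_neg at hcon
  have hC1 : (1 : ℝ) ≤ C := le_max_left _ _
  have key : ∀ x : K, C < ‖φ x‖ → C < ‖φ (f.eval x)‖ := by
    intro x hx
    set t := ‖φ x‖ with ht
    have ht1 : 1 < t := lt_of_le_of_lt hC1 hx
    have htpos : 0 < t := lt_trans zero_lt_one ht1
    have hφ : φ (f.eval x) = (∑ i ∈ Finset.range d, φ (f.coeff i) * (φ x) ^ i) +
        φ (f.coeff d) * (φ x) ^ d := by
      rw [eval_eq_sum_range, map_sum, ← Finset.sum_range_succ]
      simp [map_mul, map_pow, hd]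
    have hsmall : ‖∑ i ∈ Finset.range d, φ (f.coeff i) * (φ x) ^ i‖ ≤ A * t ^ (d - 1) := by
      calc ‖∑ i ∈ Finset.range d, φ (f.coeff i) * (φ x) ^ i‖
          ≤ ∑ i ∈ Finset.range d, ‖φ (f.coeff i) * (φ x) ^ i‖ := norm_sum_le _ _
        _ ≤ ∑ i ∈ Finset.range d, ‖φ (f.coeff i)‖ * t ^ (d - 1) := by
            apply Finset.sum_le_sum
            intro i hi
            have hi' : i < d := Finset.mem_range.mp hi
            rw [norm_mul, norm_pow]
            exact mul_le_mul_of_nonneg_left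
              (pow_le_pow_right₀ ht1.le (by omega)) (norm_nonneg _)
        _ = A * t ^ (d - 1) := by rw [← Finset.sum_mul]
    have hlead : ‖φ (f.coeff d) * (φ x) ^ d‖ = Ld * t ^ d := by
      rw [norm_mul, norm_pow]
    have hnorm : Ld * t ^ d - A * t ^ (d - 1) ≤ ‖φ (f.eval x)‖ := by
      have h1 := norm_sub_norm_le (φ (f.coeff d) * (φ x) ^ d)
        (-(∑ i ∈ Finset.range d, φ (f.coeff i) * (φ x) ^ i))
      rw [norm_neg, sub_neg_eq_add, add_comm, hlead] at h1
      rw [hφ]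
      linarith
    have htd : t ^ d = t ^ (d - 1) * t := by
      rw [← pow_succ]
      congr 1
      omega
    have hLdt : 1 + A < Ld * t := by
      have : (1 + A) / Ld ≤ C := le_max_right _ _
      have h2 : (1 + A) / Ld < t := lt_of_le_of_lt this hx
      calc 1 + A = ((1 + A) / Ld) * Ld := by field_simp
        _ < t * Ld := by nlinarith
        _ = Ld * t := mul_comm _ _
    have htpow : t ≤ t ^ (d - 1) := by
      calc t = t ^ 1 := (pow_one t).symm
        _ ≤ t ^ (d - 1) := pow_le_pow_right₀ ht1.le (by omega)
    have htpowpos : 0 < t ^ (d - 1) := pow_pos htpos _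
    calc C < t := hx
      _ ≤ t ^ (d - 1) := htpow
      _ = t ^ (d - 1) * 1 := (mul_one _).symm
      _ ≤ t ^ (d - 1) * (Ld * t - A) := by nlinarith
      _ = Ld * t ^ d - A * t ^ (d - 1) := by rw [htd]; ring
      _ ≤ ‖φ (f.eval x)‖ := hnorm
  have hiter : ∀ j : ℕ, C < ‖φ (f.eval^[j] β)‖ := by
    intro j
    induction j with
    | zero => exact hcon
    | succ j ih => rw [Function.iterate_succ_apply']; exact key _ ih
  have := hiter k
  rw [h0, map_zero, norm_zero] at this
  linarith



theorem stmt_18 (K : Type*) [Field K] [NumberField K] (f : Polynomial K)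
    (hdeg : 2 ≤ f.natDegree) :
    {α : K | ∃ k : ℕ, 1 ≤ k ∧ f.eval^[k] α = 0}.Finite := by
  classical
  have hf0 : f ≠ 0 := by
    intro h
    rw [h, Polynomial.natDegree_zero] at hdeg
    omega
  have hcd : f.coeff f.natDegree ≠ 0 := by
    simpa [Polynomial.coeff_natDegree] using Polynomial.leadingCoeff_ne_zero.mpr hf0
  set d := f.natDegree with hd
  set R := NumberField.RingOfIntegers K with hR
  obtain ⟨m, hm⟩ := IsLocalization.exist_integer_multiples (nonZeroDivisors R)
    (Finset.range (d + 1)) (fun i => f.coeff i)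
  set M : K := algebraMap R K (m : R) with hM
  have hmK : M ≠ 0 := by
    rw [hM]
    exact IsFractionRing.to_map_ne_zero_of_mem_nonZeroDivisors m.2
  set c : K := M ^ 2 * f.coeff d with hc
  have hc0 : c ≠ 0 := mul_ne_zero (pow_ne_zero _ hmK) hcd
  set B : ℝ := ∑ φ : K →+* ℂ, ‖φ c‖ *
    max 1 ((1 + ∑ i ∈ Finset.range d, ‖φ (f.coeff i)‖) / ‖φ (f.coeff d)‖) with hB
  have hfin := (NumberField.Embeddings.finite_of_norm_le K ℂ B).preimage
    (f := fun x : K => c * x) ((mul_right_injective₀ hc0).injOn)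
  apply Set.Finite.subset hfin
  rintro β ⟨k, -, hk0⟩
  simp only [Set.mem_preimage, Set.mem_setOf_eq]
  constructor
  · -- integrality of c * β
    have hval : ∀ v : IsDedekindDomain.HeightOneSpectrum R, v.valuation K (c * β) ≤ 1 := by
      intro v
      set γ := (v.valuation K : Valuation K _) with hγ
      set μ := γ M with hμ
      have hμ0 : μ ≠ 0 := γ.ne_zero_iff.mpr hmK
      have hμ1 : μ ≤ 1 := v.valuation_le_one (m : R)
      have hmi : ∀ i, i ≤ d → μ * γ (f.coeff i) ≤ 1 := by
        intro i hi
        obtain ⟨r, hr⟩ := hm i (Finset.mem_range.mpr (by omega))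
        rw [Algebra.smul_def] at hr
        rw [hμ, ← map_mul, hM, ← hr]
        exact v.valuation_le_one r
      set L := γ (f.coeff d) with hL
      have hcase := val_le_of_iter_eq_zero γ f hdeg
        (T := (Finset.range d).sup (fun j => γ (f.coeff j)))
        (fun i hi => Finset.le_sup (f := fun j => γ (f.coeff j)) (Finset.mem_range.mpr hi)) hk0
      set T := (Finset.range d).sup (fun j => γ (f.coeff j)) with hT
      have hμL : μ * L ≤ 1 := hmi d le_rfl
      have hγcβ : γ (c * β) = μ * (μ * (L * γ β)) := by
        rw [hc, map_mul, map_mul, map_pow, ← hμ, ← hL, pow_two, mul_assoc μ μ L,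
          mul_assoc, mul_assoc]
      rw [hγcβ]
      rcases hcase with h1 | h2 | h3
      · have hinner : μ * (L * γ β) ≤ 1 := by
          rw [← mul_assoc]
          exact mul_le_one' hμL h1
        exact mul_le_one' hμ1 hinner
      · exact mul_le_one' hμ1 (mul_le_one' hμ1 h2)
      · have hTinv : T ≤ μ⁻¹ := by
          apply Finset.sup_le
          intro i hi
          have h := hmi i (le_of_lt (Finset.mem_range.mp hi))
          calc γ (f.coeff i) = μ⁻¹ * (μ * γ (f.coeff i)) :=
                (inv_mul_cancel_left₀ hμ0 _).symm
            _ ≤ μ⁻¹ * 1 := mul_le_mul_right h _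
            _ = μ⁻¹ := mul_one _
        have hinner : μ * (L * γ β) ≤ 1 := by
          calc μ * (L * γ β) ≤ μ * T := mul_le_mul_right h3 μ
            _ ≤ μ * μ⁻¹ := mul_le_mul_right hTinv μ
            _ = 1 := mul_inv_cancel₀ hμ0
        exact mul_le_one' hμ1 hinner
    obtain ⟨r, hr⟩ := mem_int_of_val_le_one (c * β) hval
    rw [← hr]
    exact NumberField.RingOfIntegers.isIntegral_coe r
  · intro φ
    have hterm := norm_le_of_iter_eq_zero φ f hdeg hk0
    have hC1 : (0:ℝ) ≤ max 1 ((1 + ∑ i ∈ Finset.range d, ‖φ (f.coeff i)‖) /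
        ‖φ (f.coeff d)‖) := le_trans zero_le_one (le_max_left _ _)
    calc ‖φ (c * β)‖ = ‖φ c‖ * ‖φ β‖ := by rw [map_mul, norm_mul]
      _ ≤ ‖φ c‖ * max 1 ((1 + ∑ i ∈ Finset.range d, ‖φ (f.coeff i)‖) /
          ‖φ (f.coeff d)‖) := mul_le_mul_of_nonneg_left hterm (norm_nonneg _)
      _ ≤ B := Finset.single_le_sum
          (f := fun ψ : K →+* ℂ => ‖ψ c‖ * max 1
            ((1 + ∑ i ∈ Finset.range d, ‖ψ (f.coeff i)‖) / ‖ψ (f.coeff d)‖))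
          (fun ψ _ => mul_nonneg (norm_nonneg _)
            (le_trans zero_le_one (le_max_left _ _)))
          (Finset.mem_univ φ)
end
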